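/- Fix ε ∈ (0,1) and ε' > 0, and assume |α| ≤ Q·n/(8(1+ε')). Then the number of edges of the 1-skeleton of Y with both endpoints in S satisfies |E(S)| ≤ |α|·( 1/((1−ε)²(1+ε')) + 12q/((1−ε)Q) ). -/

import Mathlib

open scoped Classical
open Matrix

structure SComplex (V : Type) [DecidableEq V] where
  faces : Finset (Finset V)
  down_closed : ∀ σ ∈ faces, ∀ τ ⊆ σ, τ ∈ faces

namespace SComplex

variable {V : Type} [Fintype V] [DecidableEq V]

/-- The faces of cardinality `n` (i.e. of dimension `n-1`); so `K Y 2` is the edge set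
and `K Y 3` the set of triangles. -/
def K (X : SComplex V) (n : ℕ) : Finset (Finset V) := X.faces.filter fun σ => σ.card = n

/-- `X` is pure with all facets (maximal faces) of cardinality `D` (dimension `D-1`). -/
def IsPure (X : SComplex V) (D : ℕ) : Prop :=
  X.faces.Nonempty ∧ ∀ σ ∈ X.faces, ∃ τ ∈ X.faces, σ ⊆ τ ∧ τ.card = D

end SComplex

variable {V : Type} [Fintype V] [DecidableEq V]

/-- `t_i`: the number of triangles of `Y` containing exactly `i` edges of `α`. -/
def tcount (Y : SComplex V) (α : Finset (Finset V)) (i : ℕ) : ℕ :=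
  ((Y.K 3).filter fun τ => (α.filter fun e => e ⊆ τ).card = i).card

/-- `α_v`: the set of edges of `α` containing the vertex `v`. -/
def alphaV (α : Finset (Finset V)) (v : V) : Finset (Finset V) :=
  α.filter fun e => v ∈ e

/-- The 1-skeleton of `Y`, as a simple graph on the vertex type. -/
def skeletonGraph (Y : SComplex V) : SimpleGraph V where
  Adj u w := u ≠ w ∧ ({u, w} : Finset V) ∈ Y.faces
  symm := by
    constructor
    intro u w h
    exact ⟨h.1.symm, by rw [Finset.pair_comm]; exact h.2⟩
  loopless := by constructor; intro u h; exact h.1 rfl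

/-- The vertices of the link of `v`: the edges of `Y` containing `v`. -/
def linkVerts (Y : SComplex V) (v : V) : Finset (Finset V) :=
  (Y.K 2).filter fun e => v ∈ e

/-- The link graph `Y_v`: vertices are the edges of `Y` containing `v`, two edges being
adjacent iff they lie in a common triangle of `Y`. -/
def linkGraph (Y : SComplex V) (v : V) : SimpleGraph ↥(linkVerts Y v) where
  Adj e f := e ≠ f ∧ (e.1 ∪ f.1) ∈ Y.K 3
  symm := by
    constructor
    intro e f h
    exact ⟨h.1.symm, by rw [Finset.union_comm]; exact h.2⟩
  loopless := by constructor; intro e h; exact h.1 rfl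

/-- The standing hypotheses on the 2-dimensional complex `Y` (with `Q = 2(q²+q+1)`):
`q ≥ 2`; `Y` is finite pure 2-dimensional; (i) every edge lies in exactly `q+1` triangles;
(ii) the 1-skeleton is a connected `Q`-regular graph whose adjacency eigenvalues other than
`Q` have absolute value at most `6q`. -/
def Setup2 (q : ℕ) (Y : SComplex V) : Prop :=
  2 ≤ q ∧ Y.IsPure 3 ∧
  (∀ e ∈ Y.K 2, ((Y.K 3).filter fun τ => e ⊆ τ).card = q + 1) ∧
  (skeletonGraph Y).Connected ∧
  (∀ v : V, (skeletonGraph Y).degree v = 2 * (q ^ 2 + q + 1)) ∧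
  (∀ mu : ℝ, (∃ f : V → ℝ, f ≠ 0 ∧ (skeletonGraph Y).adjMatrix ℝ *ᵥ f = mu • f) →
    mu = 2 * ((q : ℝ) ^ 2 + q + 1) ∨ |mu| ≤ 6 * (q : ℝ))

lemma inner_eq_dot {V : Type} [Fintype V] (u w : EuclideanSpace ℝ V) :
    (inner ℝ u w : ℝ) = ∑ v, u v * w v := by
  simp [PiLp.inner_apply, RCLike.inner_apply, mul_comm]

lemma mixing {V : Type} [Fintype V] [DecidableEq V] (G : SimpleGraph V) [DecidableRel G.Adj]
    (Q lam : ℝ) (hlam : 0 ≤ lam)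
    (hreg : ∀ v, (G.degree v : ℝ) = Q) (hconn : G.Connected)
    (hspec : ∀ mu : ℝ, (∃ f : V → ℝ, f ≠ 0 ∧ G.adjMatrix ℝ *ᵥ f = mu • f) → mu = Q ∨ |mu| ≤ lam)
    (x : V → ℝ) :
    x ⬝ᵥ (G.adjMatrix ℝ *ᵥ x) ≤
      Q * (∑ v, x v) ^ 2 / (Fintype.card V : ℝ) + lam * ∑ v, x v ^ 2 := by
  have hne : Nonempty V := hconn.nonempty
  have hnpos : (0 : ℝ) < Fintype.card V := by
    exact_mod_cast Fintype.card_pos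
  set A : Matrix V V ℝ := G.adjMatrix ℝ with hAdef
  have hA : A.IsHermitian := by
    rw [Matrix.IsHermitian, conjTranspose_eq_transpose_of_trivial]
    exact SimpleGraph.isSymm_adjMatrix G
  set b := hA.eigenvectorBasis with hbdef
  set μ := hA.eigenvalues with hmdef
  have hQ0 : 0 ≤ Q := by rw [← hreg (Classical.arbitrary V)]; positivity
  have hmv : ∀ i, A *ᵥ (b i : V → ℝ) = μ i • (b i : V → ℝ) :=
    fun i => hA.mulVec_eigenvectorBasis i
  have heig : ∀ i, μ i = Q ∨ |μ i| ≤ lam := by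
    intro i
    refine hspec (μ i) ⟨(b i : V → ℝ), ?_, hmv i⟩
    exact fun h => b.orthonormal.ne_zero i ((WithLp.ofLp_eq_zero (p := 2)).mp h)
  have hconst : ∀ i, μ i = Q → ∀ v w : V, (b i : V → ℝ) v = (b i : V → ℝ) w := by
    intro i hi v w
    have h1 := hmv i
    rw [hi] at h1
    have hlap : G.lapMatrix ℝ *ᵥ (b i : V → ℝ) = 0 := by
      have hd : G.degMatrix ℝ *ᵥ (b i : V → ℝ) = Q • (b i : V → ℝ) := by
        ext v
        simp [SimpleGraph.degMatrix_mulVec_apply, hreg v]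
      rw [SimpleGraph.lapMatrix, Matrix.sub_mulVec, hd, h1, sub_self]
    have := (G.lapMatrix_mulVec_eq_zero_iff_forall_reachable (x := (b i : V → ℝ))).mp
      hlap
    exact this v w (hconn.preconnected v w)
  set x' : EuclideanSpace ℝ V := WithLp.toLp 2 x with hx'
  set c : V → ℝ := fun i => (b i : V → ℝ) ⬝ᵥ x with hcdef
  have hcinner : ∀ i, (inner ℝ (b i) x' : ℝ) = c i := by
    intro i; rw [inner_eq_dot]; rfl
  have hcinner' : ∀ i, (inner ℝ x' (b i) : ℝ) = c i := by
    intro i; rw [real_inner_comm]; exact hcinner i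
  have hpar : ∑ i, c i ^ 2 = ∑ v, x v ^ 2 := by
    have h0 := b.sum_inner_mul_inner x' x'
    simp_rw [hcinner', hcinner] at h0
    rw [inner_eq_dot] at h0
    simpa [sq] using h0
  have hexp : x ⬝ᵥ (A *ᵥ x) = ∑ i, μ i * c i ^ 2 := by
    set y' : EuclideanSpace ℝ V := WithLp.toLp 2 (A *ᵥ x) with hy'
    have h0 := b.sum_inner_mul_inner x' y'
    simp_rw [hcinner'] at h0
    have h1 : ∀ i, (inner ℝ (b i) y' : ℝ) = μ i * c i := by
      intro i
      rw [inner_eq_dot]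
      have : (∑ v, (b i : V → ℝ) v * y' v) = (b i : V → ℝ) ⬝ᵥ (A *ᵥ x) := rfl
      rw [this, Matrix.dotProduct_mulVec, ← Matrix.mulVec_transpose,
        (show Aᵀ = A from SimpleGraph.isSymm_adjMatrix G), hmv i,
        smul_dotProduct]
      rfl
    simp_rw [h1] at h0
    have h2 : x ⬝ᵥ y' = (inner ℝ x' y' : ℝ) := by rw [inner_eq_dot]; rfl
    rw [h2, ← h0]
    apply Finset.sum_congr rfl
    intro i _; ring
  set T : Finset V := Finset.univ.filter (fun i => μ i = Q) with hTdef
  have hnorm : ∀ i, (b i : V → ℝ) ⬝ᵥ (b i : V → ℝ) = 1 := by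
    intro i
    have : (inner ℝ (b i) (b i) : ℝ) = 1 := by
      rw [real_inner_self_eq_norm_sq, b.orthonormal.1 i]; norm_num
    rw [inner_eq_dot] at this
    exact this
  have hconst' : ∀ i ∈ T, ∃ t, (∀ v, (b i : V → ℝ) v = t) ∧
      (Fintype.card V : ℝ) * (t * t) = 1 := by
    intro i hi
    refine ⟨(b i : V → ℝ) (Classical.arbitrary V),
      fun v => hconst i (Finset.mem_filter.mp hi).2 v _, ?_⟩
    have := hnorm i
    rw [show ((b i : V → ℝ) ⬝ᵥ (b i : V → ℝ)) =
      ∑ _v : V, ((b i : V → ℝ) (Classical.arbitrary V)) *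
        ((b i : V → ℝ) (Classical.arbitrary V)) from
      Finset.sum_congr rfl (fun v _ => by
        rw [hconst i (Finset.mem_filter.mp hi).2 v (Classical.arbitrary V)])] at this
    simpa [Finset.sum_const, mul_comm] using this
  have hTsub : ∃ i₀, T ⊆ {i₀} := by
    rw [← Finset.card_le_one_iff_subset_singleton]
    refine Finset.card_le_one.mpr ?_
    intro i hi j hj
    by_contra hij
    have hio : (inner ℝ (b i) (b j) : ℝ) = 0 := b.orthonormal.2 hij
    rw [inner_eq_dot] at hio
    obtain ⟨t, ht, htn⟩ := hconst' i hi
    obtain ⟨s, hs, hsn⟩ := hconst' j hj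
    have h3 : (Fintype.card V : ℝ) * (t * s) = 0 := by
      rw [← hio]; simp [ht, hs, Finset.sum_const, mul_comm]
    nlinarith [htn, hsn, h3]
  have hcQ : ∀ i ∈ T, c i ^ 2 = (∑ v, x v) ^ 2 / (Fintype.card V : ℝ) := by
    intro i hi
    obtain ⟨t, ht, htn⟩ := hconst' i hi
    have hc : c i = t * ∑ v, x v := by
      simp only [hcdef, dotProduct, ht, Finset.mul_sum]
    rw [hc, eq_div_iff (ne_of_gt hnpos)]
    nlinarith [htn]
  rw [hexp, ← Finset.sum_filter_add_sum_filter_not Finset.univ (fun i => μ i = Q)]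
  have hb1 : ∑ i ∈ T, μ i * c i ^ 2 ≤ Q * (∑ v, x v) ^ 2 / (Fintype.card V : ℝ) := by
    obtain ⟨i₀, hi₀⟩ := hTsub
    rcases Finset.subset_singleton_iff.mp hi₀ with h | h
    · rw [h]; simp; positivity
    · have hmem : i₀ ∈ T := by rw [h]; exact Finset.mem_singleton_self i₀
      rw [h, Finset.sum_singleton, (Finset.mem_filter.mp hmem).2, hcQ i₀ hmem,
        mul_div_assoc]
  have hb2 : ∑ i ∈ Finset.univ.filter (fun i => ¬ μ i = Q), μ i * c i ^ 2 ≤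
      lam * ∑ v, x v ^ 2 := by
    rw [← hpar, Finset.mul_sum]
    calc ∑ i ∈ Finset.univ.filter (fun i => ¬ μ i = Q), μ i * c i ^ 2
        ≤ ∑ i ∈ Finset.univ.filter (fun i => ¬ μ i = Q), lam * c i ^ 2 := by
          apply Finset.sum_le_sum
          intro i hi
          have := (heig i).resolve_left (Finset.mem_filter.mp hi).2
          have habs : μ i ≤ lam := le_trans (le_abs_self _) this
          nlinarith [sq_nonneg (c i)]
      _ ≤ ∑ i, lam * c i ^ 2 := by
          apply Finset.sum_le_sum_of_subset_of_nonneg (Finset.filter_subset _ _)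
          intro i _ _
          positivity
  exact add_le_add hb1 hb2

lemma sum_alphaV {Y : SComplex V} (α : Finset (Finset V)) (hα : α ⊆ Y.K 2) :
    ∑ v : V, (alphaV α v).card = 2 * α.card := by
  simp only [alphaV, Finset.card_filter]
  rw [Finset.sum_comm]
  have h1 : ∀ e ∈ α, (∑ v : V, if v ∈ e then 1 else 0) = 2 := by
    intro e he
    have hc : e.card = 2 := (Finset.mem_filter.mp (hα he)).2
    rw [← Finset.card_filter]
    rw [show Finset.univ.filter (fun v => v ∈ e) = e from by ext v; simp]
    exact hc
  rw [Finset.sum_congr rfl h1, Finset.sum_const, smul_eq_mul, mul_comm]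

lemma pairs_eq_twice_edges (Y : SComplex V) (S : Finset V) :
    ((S ×ˢ S).filter fun p => (skeletonGraph Y).Adj p.1 p.2).card
      = 2 * ((Y.K 2).filter fun e => e ⊆ S).card := by
  set P := (S ×ˢ S).filter fun p => (skeletonGraph Y).Adj p.1 p.2 with hP
  set E := (Y.K 2).filter fun e => e ⊆ S with hE
  have key : ∀ p ∈ P, ({p.1, p.2} : Finset V) ∈ E := by
    intro p hp
    obtain ⟨hmem, hadj⟩ := Finset.mem_filter.mp hp
    rw [Finset.mem_product] at hmem
    refine Finset.mem_filter.mpr ⟨Finset.mem_filter.mpr ⟨hadj.2, ?_⟩, ?_⟩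
    · exact Finset.card_pair hadj.1
    · exact Finset.insert_subset hmem.1 (Finset.singleton_subset_iff.mpr hmem.2)
  rw [Finset.card_eq_sum_card_fiberwise key]
  have hfib : ∀ e ∈ E, (P.filter fun p => ({p.1, p.2} : Finset V) = e).card = 2 := by
    intro e he
    obtain ⟨heK, heS⟩ := Finset.mem_filter.mp he
    obtain ⟨hef, hec⟩ := Finset.mem_filter.mp heK
    obtain ⟨a, b, hab, rfl⟩ := Finset.card_eq_two.mp hec
    have haS : a ∈ S := heS (by simp)
    have hbS : b ∈ S := heS (by simp)
    have habAdj : (skeletonGraph Y).Adj a b := ⟨hab, hef⟩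
    have hset : P.filter (fun p => ({p.1, p.2} : Finset V) = {a, b})
        = {(a, b), (b, a)} := by
      ext p
      simp only [Finset.mem_filter, Finset.mem_insert, Finset.mem_singleton, hP,
        Finset.mem_product]
      constructor
      · rintro ⟨⟨⟨h1, h2⟩, hadj⟩, hpair⟩
        have hp1 : p.1 ∈ ({a, b} : Finset V) := by rw [← hpair]; simp
        have hp2 : p.2 ∈ ({a, b} : Finset V) := by rw [← hpair]; simp
        have hne : p.1 ≠ p.2 := hadj.1
        simp only [Finset.mem_insert, Finset.mem_singleton] at hp1 hp2
        rcases hp1 with h | h <;> rcases hp2 with h' | h'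
        · exact absurd (h.trans h'.symm) hne
        · exact Or.inl (Prod.ext_iff.mpr ⟨h, h'⟩)
        · exact Or.inr (Prod.ext_iff.mpr ⟨h, h'⟩)
        · exact absurd (h.trans h'.symm) hne
      · rintro (rfl | rfl)
        · exact ⟨⟨⟨haS, hbS⟩, habAdj⟩, rfl⟩
        · exact ⟨⟨⟨hbS, haS⟩, habAdj.symm⟩, by rw [Finset.pair_comm]⟩
    rw [hset]
    rw [Finset.card_insert_of_notMem (by simp [Prod.ext_iff]; exact fun h _ => hab h),
      Finset.card_singleton]
  rw [Finset.sum_congr rfl hfib, Finset.sum_const, smul_eq_mul, mul_comm]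

lemma indicator_dot {V : Type} [Fintype V] [DecidableEq V] (G : SimpleGraph V)
    [DecidableRel G.Adj] (S : Finset V) :
    (fun v => if v ∈ S then (1:ℝ) else 0) ⬝ᵥ
      (G.adjMatrix ℝ *ᵥ fun v => if v ∈ S then (1:ℝ) else 0)
      = (((S ×ˢ S).filter fun p => G.Adj p.1 p.2).card : ℝ) := by
  have hterm : ∀ v u : V, (if v ∈ S then (1:ℝ) else 0) *
      (G.adjMatrix ℝ v u * (if u ∈ S then (1:ℝ) else 0))
      = if v ∈ S then (if u ∈ S then (if G.Adj v u then (1:ℝ) else 0) else 0) else 0 := by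
    intro v u
    rw [SimpleGraph.adjMatrix_apply]
    split_ifs <;> ring
  have lhs : (fun v => if v ∈ S then (1:ℝ) else 0) ⬝ᵥ
      (G.adjMatrix ℝ *ᵥ fun v => if v ∈ S then (1:ℝ) else 0)
      = ∑ v ∈ S, ∑ u ∈ S, (if G.Adj v u then (1:ℝ) else 0) := by
    simp only [dotProduct, mulVec, dotProduct, Finset.mul_sum]
    simp_rw [hterm]
    have step : ∀ v : V, (∑ u : V, if v ∈ S then
        (if u ∈ S then (if G.Adj v u then (1:ℝ) else 0) else 0) else 0)
        = if v ∈ S then (∑ u : V, if u ∈ S then (if G.Adj v u then (1:ℝ) else 0) else 0)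
          else 0 := by
      intro v; by_cases h : v ∈ S <;> simp [h]
    simp_rw [step]
    rw [Finset.sum_ite_mem, Finset.univ_inter]
    exact Finset.sum_congr rfl fun v _ => by rw [Finset.sum_ite_mem, Finset.univ_inter]
  rw [lhs, Finset.card_filter]
  push_cast
  rw [Finset.sum_product]

lemma step_thick {V : Type} [Fintype V] [DecidableEq V] {Y : SComplex V}
    (α : Finset (Finset V)) (hα : α ⊆ Y.K 2) (c : ℝ) (S : Finset V)
    (hS : ∀ v ∈ S, c ≤ ((alphaV α v).card : ℝ)) :
    (S.card : ℝ) * c ≤ 2 * (α.card : ℝ) := by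
  calc (S.card : ℝ) * c = S.card • c := by rw [nsmul_eq_mul]
    _ ≤ ∑ v ∈ S, ((alphaV α v).card : ℝ) := Finset.card_nsmul_le_sum S _ _ hS
    _ ≤ ∑ v : V, ((alphaV α v).card : ℝ) :=
        Finset.sum_le_sum_of_subset_of_nonneg (Finset.subset_univ S)
          (fun v _ _ => by positivity)
    _ = 2 * (α.card : ℝ) := by
        rw [← Nat.cast_sum, sum_alphaV α hα]; push_cast; ring

lemma step_mixing {V : Type} [Fintype V] [DecidableEq V] (Y : SComplex V)
    (Q lam : ℝ) (hlam : 0 ≤ lam)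
    (hreg : ∀ v, ((skeletonGraph Y).degree v : ℝ) = Q) (hconn : (skeletonGraph Y).Connected)
    (hspec : ∀ mu : ℝ, (∃ f : V → ℝ, f ≠ 0 ∧ (skeletonGraph Y).adjMatrix ℝ *ᵥ f = mu • f) →
      mu = Q ∨ |mu| ≤ lam)
    (S : Finset V) :
    2 * (((Y.K 2).filter fun e => e ⊆ S).card : ℝ)
      ≤ Q * (S.card : ℝ) ^ 2 / (Fintype.card V : ℝ) + lam * (S.card : ℝ) := by
  have hmix := mixing (skeletonGraph Y) Q lam hlam hreg hconn hspec
    (fun v => if v ∈ S then (1:ℝ) else 0)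
  rw [indicator_dot] at hmix
  have hsum1 : ∑ v : V, (if v ∈ S then (1:ℝ) else 0) = (S.card : ℝ) := by
    rw [Finset.sum_ite_mem, Finset.univ_inter, Finset.sum_const, nsmul_eq_mul, mul_one]
  have hsum2 : ∑ v : V, (if v ∈ S then (1:ℝ) else 0) ^ 2 = (S.card : ℝ) := by
    rw [← hsum1]
    exact Finset.sum_congr rfl fun v _ => by by_cases h : v ∈ S <;> simp [h]
  rw [hsum1, hsum2] at hmix
  have hPE := pairs_eq_twice_edges Y S
  calc 2 * (((Y.K 2).filter fun e => e ⊆ S).card : ℝ)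
      = (((S ×ˢ S).filter fun p => (skeletonGraph Y).Adj p.1 p.2).card : ℝ) := by
        exact_mod_cast (congrArg (Nat.cast (R := ℝ)) hPE).symm
    _ ≤ _ := hmix

lemma final_arith (qv n a s E ε ε' : ℝ) (hq2 : 2 ≤ qv) (hn1 : 1 ≤ n)
    (ha0 : 0 ≤ a) (hs0 : 0 ≤ s) (hE0 : 0 ≤ E)
    (hc : 0 < 1 - ε) (hd : 0 < 1 + ε')
    (h1 : 2 * E ≤ 2 * (qv ^ 2 + qv + 1) * s ^ 2 / n + 6 * qv * s)
    (h2 : s * ((1 - ε) * (2 * (qv ^ 2 + qv + 1)) / 2) ≤ 2 * a)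
    (h3 : a ≤ 2 * (qv ^ 2 + qv + 1) * n / (8 * (1 + ε'))) :
    E ≤ a * (1 / ((1 - ε) ^ 2 * (1 + ε')) + 12 * qv / ((1 - ε) * (2 * (qv ^ 2 + qv + 1)))) := by
  set Qr : ℝ := 2 * (qv ^ 2 + qv + 1) with hQrdef
  have hQpos : (0 : ℝ) < Qr := by nlinarith
  have hnpos : (0 : ℝ) < n := by linarith
  have hm1 : s * ((1 - ε) * Qr) ≤ 4 * a := by nlinarith [h2]
  have h3' : 8 * (1 + ε') * a ≤ Qr * n := by
    have := (le_div_iff₀ (by positivity : (0:ℝ) < 8 * (1 + ε'))).mp h3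
    linarith
  have t2 : 3 * qv * s ≤ 12 * qv * a / ((1 - ε) * Qr) := by
    rw [le_div_iff₀ (by positivity)]
    nlinarith [mul_le_mul_of_nonneg_left hm1 (by nlinarith : (0:ℝ) ≤ 3 * qv)]
  have t1 : Qr * s ^ 2 / n / 2 ≤ a / ((1 - ε) ^ 2 * (1 + ε')) := by
    rw [div_div, div_le_div_iff₀ (by positivity) (by positivity)]
    have hsq : (s * ((1 - ε) * Qr)) * (s * ((1 - ε) * Qr)) ≤ (4 * a) * (4 * a) :=
      mul_le_mul hm1 hm1 (by positivity) (by positivity)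
    have hB2 : a * (8 * (1 + ε') * a) ≤ a * (Qr * n) :=
      mul_le_mul_of_nonneg_left h3' ha0
    nlinarith [hsq, hB2, hQpos, mul_pos hc hd, sq_nonneg s, ha0]
  have hring : a * (1 / ((1 - ε) ^ 2 * (1 + ε')) + 12 * qv / ((1 - ε) * Qr))
      = a / ((1 - ε) ^ 2 * (1 + ε')) + 12 * qv * a / ((1 - ε) * Qr) := by ring
  rw [hring]
  linarith [t1, t2, h1]

/-- Under the standing hypotheses (with `Q = 2(q²+q+1)` and `n` vertices),
fix `ε ∈ (0,1)` and `ε' > 0` and assume `|α| ≤ Qn/(8(1+ε'))`.  Then the number of edges of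
the 1-skeleton with both endpoints in the set `S` of thick vertices satisfies
`|E(S)| ≤ |α|·(1/((1−ε)²(1+ε')) + 12q/((1−ε)Q))`. -/
theorem edges_within_thick_vertices_upper_bound
    {V : Type} [Fintype V] [DecidableEq V] (q : ℕ) (Y : SComplex V) (hY : Setup2 q Y)
    (ε : ℝ) (hε0 : 0 < ε) (hε1 : ε < 1) (ε' : ℝ) (hε' : 0 < ε')
    (α : Finset (Finset V)) (hα : α ⊆ Y.K 2)
    (hsize : (α.card : ℝ) ≤
      2 * ((q : ℝ) ^ 2 + q + 1) * (Fintype.card V : ℝ) / (8 * (1 + ε'))) :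
    (((Y.K 2).filter fun e =>
        e ⊆ Finset.univ.filter (fun v : V => (alphaV α v).Nonempty ∧
          ¬ ((alphaV α v).card : ℝ) < (1 - ε) * (2 * ((q : ℝ) ^ 2 + q + 1)) / 2)).card : ℝ)
      ≤ (α.card : ℝ) *
          (1 / ((1 - ε) ^ 2 * (1 + ε')) +
            12 * (q : ℝ) / ((1 - ε) * (2 * ((q : ℝ) ^ 2 + q + 1)))) := by
  obtain ⟨hq, hpure, htri, hconn, hdeg, hspec⟩ := hY
  have hq2 : (2 : ℝ) ≤ (q : ℝ) := by exact_mod_cast hq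
  have hne : Nonempty V := hconn.nonempty
  have hn1 : (1 : ℝ) ≤ (Fintype.card V : ℝ) := by exact_mod_cast Fintype.card_pos
  have hreg : ∀ v, (((skeletonGraph Y).degree v : ℝ)) = 2 * ((q : ℝ) ^ 2 + q + 1) := by
    intro v; rw [hdeg v]; push_cast; ring
  have h2 := step_thick α hα ((1 - ε) * (2 * ((q : ℝ) ^ 2 + q + 1)) / 2)
    (Finset.univ.filter (fun v : V => (alphaV α v).Nonempty ∧
      ¬ ((alphaV α v).card : ℝ) < (1 - ε) * (2 * ((q : ℝ) ^ 2 + q + 1)) / 2))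
    (fun v hv => not_lt.mp (Finset.mem_filter.mp hv).2.2)
  have h1 := step_mixing Y (2 * ((q : ℝ) ^ 2 + q + 1)) (6 * (q : ℝ))
    (by positivity) hreg hconn hspec
    (Finset.univ.filter (fun v : V => (alphaV α v).Nonempty ∧
      ¬ ((alphaV α v).card : ℝ) < (1 - ε) * (2 * ((q : ℝ) ^ 2 + q + 1)) / 2))
  exact final_arith (q : ℝ) (Fintype.card V : ℝ) (α.card : ℝ) _ _ ε ε' hq2 hn1
    (by positivity) (by positivity) (by positivity)
    (by linarith) (by linarith) h1 h2 hsize
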